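/- Let R = ⨁_{n≥0} R_n be a Noetherian graded ring with R_0 a field of characteristic p > 0 having finite graded F-representation type by finitely generated ℚ-graded R-modules M_1, …, M_s, normalized so that [M_i]_0 ≠ 0 and [M_i]_α = 0 for α < 0. Write ᵉR ≅ ⨁_{i=1}^s ⨁_{j=1}^{n_{ei}} M_i(α_{ij}^{(e)}) as ℚ-graded R-modules. Then the set of shifts {α_{ij}^{(e)} : e ∈ ℕ, 1 ≤ i ≤ s, 1 ≤ j ≤ n_{ei}} is bounded: each α_{ij}^{(e)} ≤ 0, and there is a constant (independent of e) bounding all α_{ij}^{(e)} from below. -/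

import Mathlib

/-!
Statement 15: For a Noetherian graded ring `R` with `R_0` a field of characteristic
`p > 0` of finite graded F-representation type by normalized `ℚ`-graded modules
`M_1, …, M_s`, the set of shifts `{α_{ij}^{(e)}}` appearing in the decompositions
`ᵉR ≅ ⨁_{i,j} M_i(α_{ij}^{(e)})` is bounded: each `α_{ij}^{(e)} ≤ 0` and there is a
constant independent of `e` bounding all `α_{ij}^{(e)}` from below.
-/

open scoped DirectSum

universe u

set_option synthInstance.maxHeartbeats 1000000 in
set_option maxHeartbeats 1000000 in
lemma stmt15_auxA {k : Type u} [Field k] {R : Type u} [CommRing R] [Algebra k R]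
    (𝒜 : ℕ → Submodule k R) [GradedAlgebra 𝒜]
    {ι : Type v} [DecidableEq ι] (MM : ι → Type u) [∀ c, AddCommGroup (MM c)]
    [∀ c, Module k (MM c)]
    (ℳ : ∀ c, ℚ → Submodule k (MM c))
    (hint : ∀ c, DirectSum.IsInternal (ℳ c))
    (αc : ι → ℚ) (q : ℚ) (hq : 0 < q)
    (ψ : R ≃+ ⨁ c, MM c)
    (hgr : ∀ (d : ℕ) (y : R), y ∈ 𝒜 d → ∀ c, (ψ y) c ∈ ℳ c (αc c + (d : ℚ) * q))
    (ij : ι) (γ : ℚ) (v : MM ij) (hv : v ∈ ℳ ij γ) :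
    ∃ d : ℕ, ψ.symm (DirectSum.of (fun c => MM c) ij v) ∈ 𝒜 d ∧
      (ψ.symm (DirectSum.of (fun c => MM c) ij v) = 0 ∨ (d : ℚ) * q = γ - αc ij) := by
  classical
  set y := ψ.symm (DirectSum.of (fun c => MM c) ij v) with hy
  have hψy : ψ y = DirectSum.of (fun c => MM c) ij v := ψ.apply_symm_apply _
  set Dc := DirectSum.decompose 𝒜 y with hDc
  have hsum : ∑ d ∈ Dc.support, (Dc d : R) = y := DirectSum.sum_support_decompose 𝒜 y
  -- injectivity of degrees
  have hβinj : ∀ c : ι, Function.Injective (fun d : ℕ => αc c + (d : ℚ) * q) := by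
    intro c d₁ d₂ h
    have h2 := add_left_cancel h
    have := mul_right_cancel₀ (ne_of_gt hq) h2
    exact_mod_cast this
  -- key vanishing statement
  have key : ∀ d ∈ Dc.support, (d : ℚ) * q ≠ γ - αc ij → (Dc d : R) = 0 := by
    intro d hd hne
    have hz : ψ ((Dc d : R)) = 0 := by
      refine DFunLike.ext _ _ fun c => ?_
      simp only [DirectSum.zero_apply]
      -- the membership of the uniform target
      have hw : (DirectSum.of (fun c => MM c) ij v) c ∈ ℳ c γ := by
        rcases eq_or_ne ij c with rfl | hne'
        · rw [DirectSum.of_eq_same]; exact hv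
        · rw [DirectSum.of_eq_of_ne _ _ _ hne'.symm]; exact zero_mem _
      have hgm : ∀ d' : ℕ, (ψ (Dc d' : R)) c ∈ ℳ c (αc c + (d' : ℚ) * q) :=
        fun d' => hgr d' _ (Dc d').2 c
      -- total sum over support equals component of `of ij v`
      have h1 : ∑ d' ∈ Dc.support, (ψ (Dc d' : R)) c
          = (DirectSum.of (fun c => MM c) ij v) c := by
        conv_rhs => rw [← hψy, ← hsum]
        rw [map_sum, DFinsupp.finset_sum_apply]
      -- the lifted element
      set L : ⨁ β : ℚ, ℳ c β :=
        (∑ d' ∈ Dc.support,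
          DirectSum.of (fun β : ℚ => ℳ c β) (αc c + (d' : ℚ) * q) ⟨(ψ (Dc d' : R)) c, hgm d'⟩)
        - DirectSum.of (fun β : ℚ => ℳ c β) γ ⟨(DirectSum.of (fun c => MM c) ij v) c, hw⟩
        with hL
      have hLcoe : DirectSum.coeAddMonoidHom (ℳ c) L = 0 := by
        rw [hL, map_sub, map_sum]
        simp only [DirectSum.coeAddMonoidHom_of]
        rw [h1, sub_self]
      have hL0 : L = 0 := by
        apply (hint c).injective
        rw [hLcoe, map_zero]
      have hLd := DFunLike.congr_fun hL0 (αc c + (d : ℚ) * q)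
      rw [DirectSum.zero_apply] at hLd
      rw [hL, DFinsupp.sub_apply, DFinsupp.finset_sum_apply] at hLd
      have hsum2 : ∑ d' ∈ Dc.support,
          ((DirectSum.of (fun β : ℚ => ℳ c β) (αc c + (d' : ℚ) * q))
            ⟨(ψ (Dc d' : R)) c, hgm d'⟩) (αc c + (d : ℚ) * q)
          = (⟨(ψ (Dc d : R)) c, hgm d⟩ : ℳ c (αc c + (d : ℚ) * q)) := by
        have h3 : ∀ d' ∈ Dc.support, d' ≠ d →
            ((DirectSum.of (fun β : ℚ => ℳ c β) (αc c + (d' : ℚ) * q))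
              ⟨(ψ (Dc d' : R)) c, hgm d'⟩) (αc c + (d : ℚ) * q) = 0 :=
          fun d' _ hd' => DirectSum.of_eq_of_ne _ _ _ (fun hc => hd' (hβinj c hc).symm)
        rw [Finset.sum_eq_single_of_mem d hd h3, DirectSum.of_eq_same]
      rw [hsum2] at hLd
      -- second term vanishes
      have hterm : (DirectSum.of (fun β : ℚ => ℳ c β) γ
          ⟨(DirectSum.of (fun c => MM c) ij v) c, hw⟩) (αc c + (d : ℚ) * q) = 0 := by
        rcases eq_or_ne ij c with rfl | hne'
        · exact DirectSum.of_eq_of_ne (β := fun β : ℚ => ℳ _ β) _ _ _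
            (fun hc => hne (by rw [← hc]; ring))
        · have : (⟨(DirectSum.of (fun c => MM c) ij v) c, hw⟩ : ℳ c γ) = 0 := by
            ext
            simp [DirectSum.of_eq_of_ne _ _ _ hne'.symm]
          rw [this, map_zero, DirectSum.zero_apply]
      rw [hterm, sub_zero] at hLd
      exact (by simpa using congrArg Subtype.val hLd : _ = (0 : MM c))
    have : (Dc d : R) = (0 : R) := by
      have := ψ.injective (hz.trans (map_zero ψ).symm)
      exact this
    exact this
  by_cases hex : ∃ d : ℕ, (d : ℚ) * q = γ - αc ij
  · obtain ⟨d₀, hd₀⟩ := hex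
    refine ⟨d₀, ?_, Or.inr hd₀⟩
    have hyd : y = (Dc d₀ : R) := by
      rw [← hsum]
      refine Finset.sum_eq_single d₀ ?_ ?_
      · intro d hd hdne
        refine key d hd ?_
        intro h
        exact hdne (by exact_mod_cast mul_right_cancel₀ (ne_of_gt hq) (h.trans hd₀.symm))
      · intro h
        rw [DFinsupp.notMem_support_iff.mp h]
        simp
    rw [hyd]
    exact (Dc d₀).2
  · have hy0 : y = 0 := by
      rw [← hsum]
      exact Finset.sum_eq_zero fun d hd => key d hd (fun h => hex ⟨d, h⟩)
    exact ⟨0, by rw [hy0]; exact zero_mem _, Or.inl hy0⟩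

/-- The `ℤ`-submodule of `R` generated by all products `r ^ (p ^ e) * x` with `x`
homogeneous of degree at most `b`. -/
abbrev stmt15_T {k : Type u} [Field k] {R : Type u} [CommRing R] [Algebra k R]
    (𝒜 : ℕ → Submodule k R) (p b e : ℕ) : Submodule ℤ R :=
  Submodule.span ℤ {z : R | ∃ (r x : R) (d : ℕ), d ≤ b ∧ x ∈ 𝒜 d ∧ z = r ^ p ^ e * x}

lemma stmt15_T_mul {k : Type u} [Field k] {R : Type u} [CommRing R] [Algebra k R]
    (𝒜 : ℕ → Submodule k R) (p b e : ℕ) (r z : R) (hz : z ∈ stmt15_T 𝒜 p b e) :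
    r ^ p ^ e * z ∈ stmt15_T 𝒜 p b e := by
  induction hz using Submodule.span_induction with
  | mem t ht =>
    obtain ⟨t', x, d, hd, hx, rfl⟩ := ht
    exact Submodule.subset_span ⟨r * t', x, d, hd, hx, by rw [mul_pow]; ring⟩
  | zero => rw [mul_zero]; exact zero_mem _
  | add a b' _ _ ha hb => rw [mul_add]; exact add_mem ha hb
  | smul c a _ ha => rw [mul_smul_comm]; exact Submodule.smul_mem _ _ ha

set_option maxHeartbeats 2000000 in
set_option synthInstance.maxHeartbeats 1000000 in
/-- Let `R = ⨁_{n ≥ 0} R_n` be a Noetherian graded ring with `R_0 = k`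
a field of characteristic `p > 0`, having finite graded F-representation type by
finitely generated `ℚ`-graded `R`-modules `M_1, …, M_s` normalized so that
`[M_i]_0 ≠ 0` and `[M_i]_α = 0` for `α < 0`.  Write, for each `e`,
`ᵉR ≅ ⨁_{i,j} M_i(α_{ij}^{(e)})` as `ℚ`-graded `R`-modules (a degree shift `M(α)`
satisfies `[M(α)]_β = [M]_{α+β}`; since `[ᵉR]_β = [R]_{pᵉβ}`, an element of `𝒜 d` is
homogeneous of degree `d/pᵉ` in `ᵉR` and its `(i,j)`-component lies in
`[M_i]_{α_{ij}^{(e)} + d/pᵉ}`).  Then the set of shifts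
`{α_{ij}^{(e)} : e, i, j}` is bounded: each `α_{ij}^{(e)} ≤ 0`, and there is a constant
independent of `e` bounding all `α_{ij}^{(e)}` from below. -/
theorem stmt15 {k : Type u} [Field k] {R : Type u} [CommRing R] [Algebra k R]
    [IsNoetherianRing R]
    -- the grading of `R`, with `R_0 = k`:
    (𝒜 : ℕ → Submodule k R) [GradedAlgebra 𝒜]
    (h0 : 𝒜 0 = Submodule.span k {1})
    (p : ℕ) (hp : p.Prime) [CharP R p]
    -- the finitely generated `ℚ`-graded modules `M_1, …, M_s`:
    (s : ℕ) (M : Fin s → Type u) [∀ i, AddCommGroup (M i)] [∀ i, Module R (M i)]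
    [∀ i, Module k (M i)] [∀ i, IsScalarTower k R (M i)]
    (ℳ : ∀ i, ℚ → Submodule k (M i))
    (hfg : ∀ i, Module.Finite R (M i))
    (hinternal : ∀ i, DirectSum.IsInternal (ℳ i))
    (hsmul : ∀ (i : Fin s) (n : ℕ) (α : ℚ) (r : R) (m : M i),
      r ∈ 𝒜 n → m ∈ ℳ i α → r • m ∈ ℳ i ((n : ℚ) + α))
    -- normalization of the gradings of the `M_i`:
    (hnorm0 : ∀ i, ℳ i 0 ≠ ⊥)
    (hnormneg : ∀ (i : Fin s) (β : ℚ), β < 0 → ℳ i β = ⊥)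
    -- the decompositions `ᵉR ≅ ⨁_{i,j} M_i(α_{ij}^{(e)})` with shifts `α`:
    (m : ℕ → Fin s → ℕ) (α : ∀ (e : ℕ) (i : Fin s), Fin (m e i) → ℚ)
    (ψ : ∀ e : ℕ, R ≃+ ⨁ ij : (Σ i : Fin s, Fin (m e i)), M ij.1)
    (hψ : ∀ (e : ℕ) (r y : R), (ψ e) (r ^ p ^ e * y) = r • (ψ e) y)
    (hgr : ∀ (e : ℕ) (d : ℕ) (y : R), y ∈ 𝒜 d → ∀ ij : Σ i : Fin s, Fin (m e i),
      ((ψ e) y) ij ∈ ℳ ij.1 (α e ij.1 ij.2 + (d : ℚ) / (p : ℚ) ^ e)) :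
    (∀ (e : ℕ) (i : Fin s) (j : Fin (m e i)), α e i j ≤ 0) ∧
    ∃ C : ℚ, ∀ (e : ℕ) (i : Fin s) (j : Fin (m e i)), C ≤ α e i j := by
  classical
  haveI : Fact p.Prime := ⟨hp⟩
  have hp2 : 2 ≤ p := hp.two_le
  have hpq : (0:ℚ) < (p:ℚ) := by exact_mod_cast hp.pos
  have hpe : ∀ e : ℕ, (0:ℚ) < (p:ℚ) ^ e := fun e => pow_pos hpq e
  -- Part 1: each shift is nonpositive
  have upper : ∀ (e : ℕ) (i : Fin s) (j : Fin (m e i)), α e i j ≤ 0 := by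
    intro e i j
    by_contra hlt
    push_neg at hlt
    obtain ⟨u, hu, hune⟩ := (Submodule.ne_bot_iff _).mp (hnorm0 i)
    have hpos : ∀ z : R, ((ψ e) z) ⟨i, j⟩ ∈ ⨆ (β : ℚ) (_ : β ≠ 0), ℳ i β := by
      intro z
      refine DirectSum.Decomposition.inductionOn 𝒜
        (motive := fun z : R => ((ψ e) z) (⟨i, j⟩ : Σ i', Fin (m e i')) ∈
          ⨆ (β : ℚ) (_ : β ≠ 0), ℳ i β) ?_ ?_ ?_ z
      · simp only [map_zero, DirectSum.zero_apply]; exact zero_mem _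
      · intro d x
        have hm := hgr e d x x.2 ⟨i, j⟩
        have hne : α e i j + (d : ℚ) / (p:ℚ) ^ e ≠ 0 :=
          ne_of_gt (add_pos_of_pos_of_nonneg hlt
            (div_nonneg (Nat.cast_nonneg d) (le_of_lt (hpe e))))
        exact le_iSup₂ (f := fun (β : ℚ) (_ : β ≠ 0) => ℳ i β) _ hne hm
      · intro z z' hz hz'
        rw [map_add, DirectSum.add_apply]
        exact add_mem hz hz'
    have hmem : u ∈ ⨆ (β : ℚ) (_ : β ≠ 0), ℳ i β := by
      have := hpos ((ψ e).symm
        (DirectSum.of (fun c : Σ i', Fin (m e i') => M c.1) ⟨i, j⟩ u))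
      rwa [AddEquiv.apply_symm_apply, DirectSum.of_eq_same] at this
    have hdisj := (hinternal i).submodule_iSupIndep 0
    exact hune (Submodule.disjoint_def.mp hdisj u hu hmem)
  refine ⟨upper, ?_⟩
  -- Part 2: a uniform lower bound on the shifts
  -- choose homogeneous generators of bounded degree for each `M i`
  have hgens : ∀ i : Fin s, ∃ Dn : ℕ, ∀ v : M i,
      v ∈ Submodule.span R {w : M i | ∃ γ : ℚ, γ ≤ (Dn : ℚ) ∧ w ∈ ℳ i γ} := by
    intro i
    obtain ⟨S, hS⟩ := (hfg i).fg_top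
    have hdec : ∀ g : M i, ∃ w : ⨁ β : ℚ, ℳ i β,
        DirectSum.coeAddMonoidHom (ℳ i) w = g := fun g => (hinternal i).surjective g
    choose w hw using hdec
    refine ⟨S.sup fun g => ((w g).support.sup fun γ => ⌈γ⌉₊), fun v => ?_⟩
    have hle : (⊤ : Submodule R (M i)) ≤ Submodule.span R
        {x : M i | ∃ γ : ℚ,
          γ ≤ ((S.sup fun g => ((w g).support.sup fun γ => ⌈γ⌉₊) : ℕ) : ℚ) ∧ x ∈ ℳ i γ} := by
      rw [← hS]
      refine Submodule.span_le.mpr ?_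
      intro g hg
      have hgsum : ∑ β ∈ (w g).support, ((w g) β : M i) = g := by
        conv_rhs => rw [← hw g]
        rw [DirectSum.coeAddMonoidHom_eq_dfinsuppSum]
        rfl
      rw [SetLike.mem_coe, ← hgsum]
      refine Submodule.sum_mem _ fun β hβ => Submodule.subset_span ⟨β, ?_, (w g β).2⟩
      calc β ≤ (⌈β⌉₊ : ℚ) := Nat.le_ceil β
        _ ≤ _ := by
          exact_mod_cast le_trans (Finset.le_sup hβ)
            (Finset.le_sup (f := fun g => ((w g).support.sup fun γ => ⌈γ⌉₊))
              (Finset.mem_coe.mp hg))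
    exact hle Submodule.mem_top
  choose Dfun hDfun using hgens
  set Dn : ℕ := Finset.univ.sup Dfun with hDn
  set A₁ : ℕ := Finset.univ.sup (fun c : Σ i', Fin (m 1 i') => ⌈-α 1 c.1 c.2⌉₊) with hA₁
  set B₁ : ℕ := Dn + A₁ with hB₁
  set B : ℕ := 2 * B₁ with hB
  -- step 1 of generation: `¹R` is generated in degrees at most `B₁ * p`
  have gen1 : ∀ z : R, z ∈ stmt15_T 𝒜 p (B₁ * p) 1 := by
    intro z
    suffices h : ∀ wsum : ⨁ c : Σ i', Fin (m 1 i'), M c.1,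
        (ψ 1).symm wsum ∈ stmt15_T 𝒜 p (B₁ * p) 1 by
      have := h (ψ 1 z); rwa [AddEquiv.symm_apply_apply] at this
    intro wsum
    refine DirectSum.induction_on wsum ?_ ?_ ?_
    · rw [map_zero]; exact zero_mem _
    · intro ij v
      have hv := hDfun ij.1 v
      induction hv using Submodule.span_induction with
      | mem x hx =>
        obtain ⟨γ, hγ, hxγ⟩ := hx
        have hgr' : ∀ (d : ℕ) (y : R), y ∈ 𝒜 d → ∀ c : Σ i', Fin (m 1 i'),
            ((ψ 1) y) c ∈ ℳ c.1 ((fun c : Σ i', Fin (m 1 i') => α 1 c.1 c.2) c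
              + (d : ℚ) * ((p:ℚ) ^ (1:ℕ))⁻¹) := by
          intro d y hy c
          have := hgr 1 d y hy c
          rwa [div_eq_mul_inv] at this
        obtain ⟨d, hdmem, hcase⟩ := stmt15_auxA 𝒜 (fun c : Σ i', Fin (m 1 i') => M c.1)
          (fun c => ℳ c.1) (fun c => hinternal c.1) (fun c => α 1 c.1 c.2)
          (((p:ℚ) ^ (1:ℕ))⁻¹) (inv_pos.mpr (hpe 1)) (ψ 1) hgr' ij γ x hxγ
        rcases hcase with h0 | heq
        · rw [h0]; exact zero_mem _
        · have hdle : (d : ℚ) ≤ (B₁ : ℚ) * (p : ℚ) := by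
            have h1 : (d : ℚ) = (γ - α 1 ij.1 ij.2) * (p : ℚ) := by
              rw [pow_one] at heq
              field_simp at heq
              linarith [heq]
            have hαA : -α 1 ij.1 ij.2 ≤ (A₁ : ℚ) := by
              calc -α 1 ij.1 ij.2 ≤ (⌈-α 1 ij.1 ij.2⌉₊ : ℚ) := Nat.le_ceil _
                _ ≤ (A₁ : ℚ) := by
                  exact_mod_cast Finset.le_sup (f := fun c : Σ i', Fin (m 1 i') =>
                    ⌈-α 1 c.1 c.2⌉₊) (Finset.mem_univ ij)
            have hγD : γ ≤ (Dn : ℚ) := by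
              calc γ ≤ (Dfun ij.1 : ℚ) := hγ
                _ ≤ (Dn : ℚ) := by
                  exact_mod_cast Finset.le_sup (f := Dfun) (Finset.mem_univ ij.1)
            have hB₁' : ((B₁ : ℚ)) = (Dn : ℚ) + (A₁ : ℚ) := by rw [hB₁]; push_cast; ring
            rw [h1, hB₁']
            have : γ - α 1 ij.1 ij.2 ≤ (Dn : ℚ) + (A₁ : ℚ) := by linarith
            exact mul_le_mul_of_nonneg_right this (le_of_lt hpq)
          have hdle' : d ≤ B₁ * p := by
            have h5 : (d:ℚ) ≤ ((B₁ * p : ℕ) : ℚ) := by push_cast; exact hdle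
            exact_mod_cast h5
          exact Submodule.subset_span ⟨1, _, d, hdle', hdmem, by rw [one_pow, one_mul]⟩
      | zero => rw [map_zero, map_zero]; exact zero_mem _
      | add x y' hx hy hpx hpy =>
        rw [map_add, map_add]; exact add_mem hpx hpy
      | smul r x hx hpx =>
        have h1 : DirectSum.of (fun c : Σ i', Fin (m 1 i') => M c.1) ij (r • x)
            = r • DirectSum.of (fun c : Σ i', Fin (m 1 i') => M c.1) ij x :=
          DirectSum.of_smul R _ _ _
        have h2 : r • DirectSum.of (fun c : Σ i', Fin (m 1 i') => M c.1) ij x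
            = ψ 1 (r ^ p ^ 1 *
              (ψ 1).symm (DirectSum.of (fun c : Σ i', Fin (m 1 i') => M c.1) ij x)) := by
          rw [hψ 1, AddEquiv.apply_symm_apply]
        rw [h1, h2, AddEquiv.symm_apply_apply]
        exact stmt15_T_mul 𝒜 p (B₁ * p) 1 r _ hpx
    · intro w₁ w₂ hw₁ hw₂
      rw [map_add]; exact add_mem hw₁ hw₂
  -- inductive step of generation
  have pushUp : ∀ (e : ℕ) (x : R) (d : ℕ), x ∈ 𝒜 d → d ≤ B * p ^ e →
      ∀ r : R, r ^ p ^ e * x ∈ stmt15_T 𝒜 p (B * p ^ (e+1)) (e+1) := by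
    intro e x d hx hd r
    have hr := gen1 r
    induction hr using Submodule.span_induction with
    | mem t ht =>
      obtain ⟨s', w', d', hd', hw', rfl⟩ := ht
      have heq : (s' ^ p ^ 1 * w') ^ p ^ e * x = s' ^ p ^ (e+1) * (w' ^ p ^ e * x) := by
        rw [mul_pow, ← pow_mul, ← pow_add, add_comm 1 e]; ring
      rw [heq]
      have hmem : w' ^ p ^ e * x ∈ 𝒜 (p ^ e * d' + d) := by
        have h1 : w' ^ p ^ e ∈ 𝒜 (p ^ e * d') := by
          have := SetLike.pow_mem_graded (p ^ e) hw'
          rwa [smul_eq_mul] at this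
        exact SetLike.mul_mem_graded h1 hx
      have hbound : p ^ e * d' + d ≤ B * p ^ (e + 1) := by
        have hstep : p ^ e * d' ≤ p ^ e * (B₁ * p) := Nat.mul_le_mul_left _ hd'
        have h2 : 2 * B₁ * p ^ e ≤ B₁ * p ^ (e + 1) := by
          rw [pow_succ]
          calc 2 * B₁ * p ^ e = B₁ * p ^ e * 2 := by ring
            _ ≤ B₁ * p ^ e * p := Nat.mul_le_mul_left _ hp2
            _ = B₁ * (p ^ e * p) := by ring
        calc p ^ e * d' + d ≤ p ^ e * (B₁ * p) + B * p ^ e := Nat.add_le_add hstep hd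
          _ = B₁ * p ^ (e+1) + 2 * B₁ * p ^ e := by rw [hB, pow_succ]; ring
          _ ≤ B₁ * p ^ (e+1) + B₁ * p ^ (e+1) := Nat.add_le_add_left h2 _
          _ = 2 * B₁ * p ^ (e+1) := by ring
          _ = B * p ^ (e+1) := by rw [hB]
      exact Submodule.subset_span ⟨s', w' ^ p ^ e * x, p ^ e * d' + d, hbound, hmem, rfl⟩
    | zero =>
      rw [zero_pow (pow_ne_zero e hp.ne_zero), zero_mul]; exact zero_mem _
    | add a b' _ _ ha hb =>
      rw [add_pow_char_pow, add_mul]; exact add_mem ha hb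
    | smul c a _ ha =>
      rw [smul_pow, smul_mul_assoc]; exact Submodule.smul_mem _ _ ha
  -- uniform generation
  have genTop : ∀ (e : ℕ) (z : R), z ∈ stmt15_T 𝒜 p (B * p ^ e) e := by
    intro e
    induction e with
    | zero =>
      intro z
      refine Submodule.subset_span ⟨z, 1, 0, Nat.zero_le _, SetLike.one_mem_graded 𝒜, ?_⟩
      rw [pow_zero, pow_one, mul_one]
    | succ e ih =>
      intro z
      have hz := ih z
      induction hz using Submodule.span_induction with
      | mem t ht =>
        obtain ⟨r, x, d, hd, hx, rfl⟩ := ht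
        exact pushUp e x d hx hd r
      | zero => exact zero_mem _
      | add a b' _ _ ha hb => exact add_mem ha hb
      | smul c a _ ha => exact Submodule.smul_mem _ _ ha
  -- conclusion: `-(B:ℚ)` is a lower bound for all shifts
  refine ⟨-(B:ℚ), ?_⟩
  intro e i j
  by_contra hlt
  push_neg at hlt
  obtain ⟨u, hu, hune⟩ := (Submodule.ne_bot_iff _).mp (hnorm0 i)
  have hvanish : ∀ z : R, z ∈ stmt15_T 𝒜 p (B * p ^ e) e → ((ψ e) z) ⟨i, j⟩ = 0 := by
    intro z hz
    induction hz using Submodule.span_induction with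
    | mem t ht =>
      obtain ⟨r, x, d, hd, hx, rfl⟩ := ht
      rw [hψ e r x, DirectSum.smul_apply]
      have hm := hgr e d x hx ⟨i, j⟩
      have hneg : α e i j + (d:ℚ)/(p:ℚ) ^ e < 0 := by
        have hdB : (d:ℚ)/(p:ℚ) ^ e ≤ (B:ℚ) := by
          rw [div_le_iff₀ (hpe e)]
          exact_mod_cast hd
        linarith
      rw [hnormneg i _ hneg, Submodule.mem_bot] at hm
      rw [hm, smul_zero]
    | zero => rw [map_zero, DirectSum.zero_apply]
    | add a b' _ _ ha hb => rw [map_add, DirectSum.add_apply, ha, hb, add_zero]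
    | smul c a _ ha => rw [map_zsmul, DirectSum.smul_apply, ha, smul_zero]
  have hfinal := hvanish ((ψ e).symm
    (DirectSum.of (fun c : Σ i', Fin (m e i') => M c.1) ⟨i, j⟩ u)) (genTop e _)
  rw [AddEquiv.apply_symm_apply, DirectSum.of_eq_same] at hfinal
  exact hune hfinal
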